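/- Let 𝒮 be a nonempty subset of ℝ^{n×m} with L1 diameter at most L, containing a point S_γ with ‖S_γ − S*‖₁ ≤ γ. Let 𝒜̃ ⊆ [0,1]^{n×m} be nonempty, Ã^ε ∈ 𝒜̃ with sup_{A ∈ 𝒜̃} inf_{S∈𝒮} USW(A,S) − inf_{S∈𝒮} USW(Ã^ε,S) ≤ ε, and A' a random 0-1 matrix with E[A'] = Ã^ε. If A* ∈ 𝒜̃ maximizes USW(·, S*) over 𝒜̃, then USW(A*, S*) − E[USW(A', S*)] ≤ ε + (2γ + L)/n. -/
import Mathlib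


open MeasureTheory

/-- Utilitarian social welfare: `USW(A,S) = (1/n) Σ_{p,r} A_{p,r} S_{p,r}`. -/
noncomputable def USW (n m : ℕ) (A S : Matrix (Fin n) (Fin m) ℝ) : ℝ :=
  (1 / (n : ℝ)) * ∑ p, ∑ r, A p r * S p r

/-- Entrywise L1 norm of a matrix. -/
noncomputable def l1Norm (n m : ℕ) (X : Matrix (Fin n) (Fin m) ℝ) : ℝ :=
  ∑ p, ∑ r, |X p r|

lemma l1Norm_nonneg (n m : ℕ) (X : Matrix (Fin n) (Fin m) ℝ) :
    0 ≤ l1Norm n m X := by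
  unfold l1Norm; positivity

lemma div_mono_nonneg {a b c : ℝ} (h : a ≤ b) (hc : 0 ≤ c) : a / c ≤ b / c := by
  rw [div_eq_mul_inv, div_eq_mul_inv]
  exact mul_le_mul_of_nonneg_right h (by positivity)

lemma usw_lip (n m : ℕ) (A S S' : Matrix (Fin n) (Fin m) ℝ)
    (hA : ∀ p r, 0 ≤ A p r ∧ A p r ≤ 1) :
    USW n m A S - USW n m A S' ≤ l1Norm n m (S - S') / n := by
  have hn : (0:ℝ) ≤ 1 / (n:ℝ) := by positivity
  have key : ∑ p, ∑ r, A p r * S p r - ∑ p, ∑ r, A p r * S' p r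
      ≤ ∑ p, ∑ r, |(S - S') p r| := by
    rw [← Finset.sum_sub_distrib]
    apply Finset.sum_le_sum
    intro p _
    rw [← Finset.sum_sub_distrib]
    apply Finset.sum_le_sum
    intro r _
    have h1 := (hA p r).1
    have h2 := (hA p r).2
    have heq : A p r * S p r - A p r * S' p r = A p r * (S p r - S' p r) := by ring
    rw [heq]
    have habs : A p r * (S p r - S' p r) ≤ |S p r - S' p r| := by
      calc A p r * (S p r - S' p r) ≤ |A p r * (S p r - S' p r)| := le_abs_self _
        _ = |A p r| * |S p r - S' p r| := abs_mul _ _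
        _ ≤ 1 * |S p r - S' p r| := by
            apply mul_le_mul_of_nonneg_right _ (abs_nonneg _)
            rw [abs_of_nonneg h1]; exact h2
        _ = |S p r - S' p r| := one_mul _
    simpa [Matrix.sub_apply] using habs
  have heq2 : USW n m A S - USW n m A S' = (1/(n:ℝ)) *
      (∑ p, ∑ r, A p r * S p r - ∑ p, ∑ r, A p r * S' p r) := by
    simp only [USW]; ring
  rw [heq2]
  calc (1/(n:ℝ)) * (∑ p, ∑ r, A p r * S p r - ∑ p, ∑ r, A p r * S' p r)
      ≤ (1/(n:ℝ)) * ∑ p, ∑ r, |(S - S') p r| :=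
        mul_le_mul_of_nonneg_left key hn
    _ = l1Norm n m (S - S') / n := by rw [l1Norm]; ring

lemma l1_comm (n m : ℕ) (X Y : Matrix (Fin n) (Fin m) ℝ) :
    l1Norm n m (X - Y) = l1Norm n m (Y - X) := by
  unfold l1Norm
  congr 1; ext p; congr 1; ext r
  simp [Matrix.sub_apply, abs_sub_comm]

theorem stmt17 (n m : ℕ)
    {Ω : Type*} [MeasurableSpace Ω] (μ : Measure Ω) [IsProbabilityMeasure μ]
    (𝒮 : Set (Matrix (Fin n) (Fin m) ℝ)) (h𝒮 : 𝒮.Nonempty)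
    (L γ ε : ℝ)
    (hdiam : ∀ S ∈ 𝒮, ∀ S' ∈ 𝒮, l1Norm n m (S - S') ≤ L)
    (Sstar : Matrix (Fin n) (Fin m) ℝ)
    (hγ : ∃ Sγ ∈ 𝒮, l1Norm n m (Sγ - Sstar) ≤ γ)
    (𝒜t : Set (Matrix (Fin n) (Fin m) ℝ)) (h𝒜ne : 𝒜t.Nonempty)
    (h𝒜frac : ∀ A ∈ 𝒜t, ∀ p r, 0 ≤ A p r ∧ A p r ≤ 1)
    (hbddA : BddAbove ((fun A => sInf ((fun S => USW n m A S) '' 𝒮)) '' 𝒜t))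
    (hbddS : ∀ A : Matrix (Fin n) (Fin m) ℝ, BddBelow ((fun S => USW n m A S) '' 𝒮))
    (Aeps : Matrix (Fin n) (Fin m) ℝ) (hAeps : Aeps ∈ 𝒜t)
    (heps : sSup ((fun A => sInf ((fun S => USW n m A S) '' 𝒮)) '' 𝒜t) -
        sInf ((fun S => USW n m Aeps S) '' 𝒮) ≤ ε)
    (A' : Ω → Matrix (Fin n) (Fin m) ℝ)
    (hA'int : ∀ p r, Integrable (fun ω => A' ω p r) μ)
    (hA'mean : ∀ p r, ∫ ω, A' ω p r ∂μ = Aeps p r)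
    (Astar : Matrix (Fin n) (Fin m) ℝ) (hAstar : Astar ∈ 𝒜t)
    (hopt : ∀ B ∈ 𝒜t, USW n m B Sstar ≤ USW n m Astar Sstar) :
    USW n m Astar Sstar - ∫ ω, USW n m (A' ω) Sstar ∂μ ≤ ε + (2 * γ + L) / n := by
  obtain ⟨Sγ, hSγ, hSγγ⟩ := hγ
  have hn : (0:ℝ) ≤ (n:ℝ) := Nat.cast_nonneg n
  -- the integral equals USW Aeps Sstar by linearity
  have hint : ∫ ω, USW n m (A' ω) Sstar ∂μ = USW n m Aeps Sstar := by
    simp only [USW]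
    rw [integral_const_mul]
    congr 1
    rw [integral_finset_sum]
    · apply Finset.sum_congr rfl
      intro p _
      rw [integral_finset_sum]
      · exact Finset.sum_congr rfl fun r _ => by rw [integral_mul_const, hA'mean]
      · intro r _; exact (hA'int p r).mul_const _
    · intro p _
      exact integrable_finset_sum _ fun r _ => (hA'int p r).mul_const _
  rw [hint]
  -- Lipschitz facts
  have lip1 : USW n m Astar Sstar - USW n m Astar Sγ ≤ γ / n := by
    calc USW n m Astar Sstar - USW n m Astar Sγ
        ≤ l1Norm n m (Sstar - Sγ) / n := usw_lip n m Astar _ _ (h𝒜frac Astar hAstar)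
      _ = l1Norm n m (Sγ - Sstar) / n := by rw [l1_comm]
      _ ≤ γ / n := div_mono_nonneg hSγγ hn
  have lip2 : USW n m Aeps Sγ - USW n m Aeps Sstar ≤ γ / n := by
    calc USW n m Aeps Sγ - USW n m Aeps Sstar
        ≤ l1Norm n m (Sγ - Sstar) / n := usw_lip n m Aeps _ _ (h𝒜frac Aeps hAeps)
      _ ≤ γ / n := div_mono_nonneg hSγγ hn
  -- USW Astar Sγ ≤ inf over 𝒮 of USW Astar + L/n
  have h2 : USW n m Astar Sγ - L / n ≤ sInf ((fun S => USW n m Astar S) '' 𝒮) := by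
    apply le_csInf (h𝒮.image _)
    rintro x ⟨S, hS, rfl⟩
    have := usw_lip n m Astar Sγ S (h𝒜frac Astar hAstar)
    have hd : l1Norm n m (Sγ - S) ≤ L := hdiam Sγ hSγ S hS
    have : USW n m Astar Sγ - USW n m Astar S ≤ L / n :=
      this.trans (div_mono_nonneg hd hn)
    linarith
  have h3 : sInf ((fun S => USW n m Astar S) '' 𝒮)
      ≤ sSup ((fun A => sInf ((fun S => USW n m A S) '' 𝒮)) '' 𝒜t) :=
    le_csSup hbddA ⟨Astar, hAstar, rfl⟩
  have h4 : sInf ((fun S => USW n m Aeps S) '' 𝒮) ≤ USW n m Aeps Sγ :=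
    csInf_le (hbddS Aeps) ⟨Sγ, hSγ, rfl⟩
  have hsplit : (2 * γ + L) / (n:ℝ) = γ / n + γ / n + L / n := by ring
  linarith
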